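/- Let $d \ge 1$ and suppose $(\tau, s)$ is a John–Strömberg pair for $\mathcal{Q}(\mathbb{R}^d)$. Then for each $\theta \in (0, s/(1-s))$, the pair $((1-\theta)\tau, \; s - \theta(1-s))$ is also a John–Strömberg pair for $\mathcal{Q}(\mathbb{R}^d)$. -/

import Mathlib

open MeasureTheory Set Metric Filter
open scoped ENNReal Topology

/-- A closed axis-parallel cube in `ℝ^d` with positive side length. -/
def IsCube {d : ℕ} (Q : Set (Fin d → ℝ)) : Prop :=
  ∃ (a : Fin d → ℝ) (l : ℝ), 0 < l ∧ Q = Set.univ.pi fun j => Set.Icc (a j) (a j + l)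

/-- `(τ, s)` is a John–Strömberg pair for the collection of all cubes in `ℝ^d`. -/
def IsJSPair (d : ℕ) (τ s : ℝ) : Prop :=
  0 < τ ∧ 0 < s ∧
    ∀ Q : Set (Fin d → ℝ), IsCube Q →
      ∀ Ep Em : Set (Fin d → ℝ), MeasurableSet Ep → MeasurableSet Em →
        Ep ⊆ Q → Em ⊆ Q → Disjoint Ep Em →
        min (volume Ep) (volume Em) > ENNReal.ofReal τ * volume ((Q \ Ep) \ Em) →
        ∃ W : Set (Fin d → ℝ), IsCube W ∧ W ⊆ Q ∧
          min (volume (Ep ∩ W)) (volume (Em ∩ W)) ≥ ENNReal.ofReal s * volume W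


variable {d : ℕ}


lemma volume_cube (a : Fin d → ℝ) {l : ℝ} (hl : 0 ≤ l) :
    volume (Set.univ.pi fun j => Set.Icc (a j) (a j + l)) = ENNReal.ofReal (l ^ d) := by
  rw [MeasureTheory.volume_pi_pi]
  simp only [Real.volume_Icc, add_sub_cancel_left]
  rw [Finset.prod_const, Finset.card_univ, Fintype.card_fin, ← ENNReal.ofReal_pow hl]

lemma volume_hyperplane (i : Fin d) (c : ℝ) : volume {x : Fin d → ℝ | x i = c} = 0 := by
  have : {x : Fin d → ℝ | x i = c} = Set.univ.pi (fun j => if j = i then {c} else univ) := by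
    ext x
    simp only [mem_setOf_eq, Set.mem_pi, mem_univ, forall_true_left]
    constructor
    · intro hx j
      by_cases hj : j = i <;> simp [hj, hx]
    · intro hx
      have := hx i
      simpa using this
  rw [this, MeasureTheory.volume_pi_pi]
  refine Finset.prod_eq_zero (Finset.mem_univ i) ?_
  simp

lemma exists_subset_volume_eq {X : Set (Fin d → ℝ)} (hX : MeasurableSet X)
    (c : Fin d → ℝ) {δ : ℝ} (hδ : 0 < δ)
    (hXb : X ⊆ Set.univ.pi fun j => Set.Icc (c j) (c j + δ))
    {t : ℝ} (ht0 : 0 ≤ t) (ht1 : t ≤ 1) (i : Fin d) :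
    ∃ A, MeasurableSet A ∧ A ⊆ X ∧ volume A = ENNReal.ofReal t * volume X := by
  have hXfin : volume X ≠ ∞ := by
    refine ne_top_of_le_ne_top ?_ (measure_mono hXb)
    rw [volume_cube c hδ.le]
    exact ENNReal.ofReal_ne_top
  -- the slicing function
  set f : ℝ → ℝ := fun u => (volume (X ∩ {x | x i ≤ u})).toReal with hf
  have hfin : ∀ u, volume (X ∩ {x | x i ≤ u}) ≠ ∞ :=
    fun u => ne_top_of_le_ne_top hXfin (measure_mono inter_subset_left)
  have hmeas : ∀ u, MeasurableSet (X ∩ {x | x i ≤ u}) := by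
    intro u
    exact hX.inter (measurableSet_le (measurable_pi_apply i) measurable_const)
  have hlip : ∀ u v : ℝ, u ≤ v → f v ≤ f u + δ ^ (d - 1) * (v - u) := by
    intro u v huv
    have hsub : X ∩ {x | x i ≤ v} ⊆ (X ∩ {x | x i ≤ u}) ∪
        (Set.univ.pi fun j => if j = i then Set.Icc u v else Set.Icc (c j) (c j + δ)) := by
      intro x hx
      rcases le_or_gt (x i) u with hc | hc
      · exact Or.inl ⟨hx.1, hc⟩
      · refine Or.inr ?_
        intro j _
        by_cases hj : j = i
        · subst hj
          simp only [if_pos rfl]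
          exact ⟨hc.le, hx.2⟩
        · simp only [if_neg hj]
          exact hXb hx.1 j (mem_univ j)
    have hvol : volume (Set.univ.pi fun j =>
        if j = i then Set.Icc u v else Set.Icc (c j) (c j + δ)) =
        ENNReal.ofReal (v - u) * ENNReal.ofReal (δ ^ (d - 1)) := by
      rw [MeasureTheory.volume_pi_pi,
        ← Finset.mul_prod_erase Finset.univ _ (Finset.mem_univ i)]
      have h1 : volume (if i = i then Set.Icc u v else Set.Icc (c i) (c i + δ)) =
          ENNReal.ofReal (v - u) := by rw [if_pos rfl, Real.volume_Icc]
      rw [h1]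
      congr 1
      have h2 : ∀ j ∈ Finset.univ.erase i,
          volume (if j = i then Set.Icc u v else Set.Icc (c j) (c j + δ)) = ENNReal.ofReal δ := by
        intro j hj
        rw [if_neg (Finset.ne_of_mem_erase hj), Real.volume_Icc, add_sub_cancel_left]
      rw [Finset.prod_congr rfl h2, Finset.prod_const, Finset.card_erase_of_mem
        (Finset.mem_univ i), Finset.card_univ, Fintype.card_fin, ← ENNReal.ofReal_pow hδ.le]
    have hU : volume (X ∩ {x | x i ≤ u} ∪ Set.univ.pi fun j =>
        if j = i then Set.Icc u v else Set.Icc (c j) (c j + δ)) ≤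
        volume (X ∩ {x | x i ≤ u}) + volume (Set.univ.pi fun j =>
        if j = i then Set.Icc u v else Set.Icc (c j) (c j + δ)) := measure_union_le _ _
    have := (measure_mono hsub).trans hU
    rw [hvol] at this
    have h2 := ENNReal.toReal_mono (by
      refine ENNReal.add_ne_top.2 ⟨hfin u, ?_⟩
      exact ENNReal.mul_ne_top ENNReal.ofReal_ne_top ENNReal.ofReal_ne_top) this
    rw [ENNReal.toReal_add (hfin u) (ENNReal.mul_ne_top ENNReal.ofReal_ne_top
      ENNReal.ofReal_ne_top), ENNReal.toReal_mul, ENNReal.toReal_ofReal (by linarith),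
      ENNReal.toReal_ofReal (by positivity)] at h2
    calc f v ≤ f u + (v - u) * δ ^ (d-1) := h2
    _ = f u + δ ^ (d-1) * (v - u) := by ring
  have hmono : Monotone f := by
    intro u v huv
    exact ENNReal.toReal_mono (hfin v) (measure_mono (inter_subset_inter_right _ (fun x hx => le_trans hx huv)))
  have hcont : ContinuousOn f (Set.Icc (c i) (c i + δ)) := by
    have : LipschitzWith (Real.toNNReal (δ ^ (d-1))) f := by
      apply LipschitzWith.of_dist_le_mul
      intro u v
      rw [Real.dist_eq, Real.dist_eq]
      rcases le_total u v with huv | huv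
      · have h1 := hlip u v huv
        have h2 := hmono huv
        rw [abs_of_nonpos (by linarith), abs_of_nonpos (by linarith)]
        have : (Real.toNNReal (δ ^ (d-1)) : ℝ) = δ ^ (d-1) := Real.coe_toNNReal _ (by positivity)
        rw [this]; nlinarith [hlip u v huv]
      · have h1 := hlip v u huv
        have h2 := hmono huv
        rw [abs_of_nonneg (by linarith), abs_of_nonneg (by linarith)]
        have : (Real.toNNReal (δ ^ (d-1)) : ℝ) = δ ^ (d-1) := Real.coe_toNNReal _ (by positivity)
        rw [this]; nlinarith
    exact this.continuous.continuousOn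
  have hleft : f (c i) = 0 := by
    have : X ∩ {x | x i ≤ c i} ⊆ {x : Fin d → ℝ | x i = c i} := by
      intro x hx
      have h1 := (hXb hx.1 i (mem_univ i)).1
      exact le_antisymm hx.2 h1
    have h0 : volume (X ∩ {x | x i ≤ c i}) = 0 :=
      measure_mono_null this (volume_hyperplane i (c i))
    simp [hf, h0]
  have hright : f (c i + δ) = (volume X).toReal := by
    have hXX : X ∩ {x | x i ≤ c i + δ} = X := by
      apply inter_eq_self_of_subset_left
      intro x hx
      exact (hXb hx i (mem_univ i)).2
    show (volume (X ∩ {x | x i ≤ c i + δ})).toReal = (volume X).toReal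
    rw [hXX]
  -- IVT
  have hv : t * (volume X).toReal ∈ Set.Icc (f (c i)) (f (c i + δ)) := by
    rw [hleft, hright]
    constructor
    · positivity
    · nlinarith [ENNReal.toReal_nonneg (a := volume X)]
  have := intermediate_value_Icc (by linarith : c i ≤ c i + δ) hcont hv
  obtain ⟨u, _, hu⟩ := this
  refine ⟨X ∩ {x | x i ≤ u}, hmeas u, inter_subset_left, ?_⟩
  have : volume (X ∩ {x | x i ≤ u}) = ENNReal.ofReal (t * (volume X).toReal) := by
    rw [← hu, hf, ENNReal.ofReal_toReal (hfin u)]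
  rw [this, ENNReal.ofReal_mul ht0, ENNReal.ofReal_toReal hXfin]



lemma s_le_half (hd : 1 ≤ d) {τ s : ℝ} (h : IsJSPair d τ s) : s ≤ 1/2 := by
  obtain ⟨hτ, hs, hJS⟩ := h
  set i0 : Fin d := ⟨0, hd⟩ with hi0
  set Q : Set (Fin d → ℝ) := Set.univ.pi fun _ => Set.Icc 0 1 with hQ
  have hQc : IsCube Q := by
    refine ⟨fun _ => 0, 1, one_pos, ?_⟩
    simp [hQ]
  set Ep : Set (Fin d → ℝ) := Set.univ.pi fun j => if j = i0 then Set.Icc 0 (1/2) else Set.Icc 0 1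
    with hEp
  set Em : Set (Fin d → ℝ) := Set.univ.pi fun j => if j = i0 then Set.Ioc (1/2) 1 else Set.Icc 0 1
    with hEm
  have hEpm : MeasurableSet Ep := by
    apply MeasurableSet.univ_pi
    intro j
    by_cases hj : j = i0 <;> simp [hj]
  have hEmm : MeasurableSet Em := by
    apply MeasurableSet.univ_pi
    intro j
    by_cases hj : j = i0 <;> simp [hj]
  have hEpQ : Ep ⊆ Q := by
    intro x hx j hj
    have h2 : x j ∈ (if j = i0 then Set.Icc (0:ℝ) (1/2) else Set.Icc 0 1) := hx j hj
    show x j ∈ Set.Icc (0:ℝ) 1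
    by_cases h1 : j = i0
    · rw [if_pos h1] at h2
      exact ⟨h2.1, le_trans h2.2 (by norm_num)⟩
    · rwa [if_neg h1] at h2
  have hEmQ : Em ⊆ Q := by
    intro x hx j hj
    have h2 : x j ∈ (if j = i0 then Set.Ioc (1/2:ℝ) 1 else Set.Icc 0 1) := hx j hj
    show x j ∈ Set.Icc (0:ℝ) 1
    by_cases h1 : j = i0
    · rw [if_pos h1] at h2
      exact ⟨le_trans (by norm_num) h2.1.le, h2.2⟩
    · rwa [if_neg h1] at h2
  have hdisj : Disjoint Ep Em := by
    rw [Set.disjoint_left]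
    intro x hx hx'
    have h1 : x i0 ∈ (if i0 = i0 then Set.Icc (0:ℝ) (1/2) else Set.Icc 0 1) := hx i0 (mem_univ i0)
    have h2 : x i0 ∈ (if i0 = i0 then Set.Ioc (1/2:ℝ) 1 else Set.Icc 0 1) := hx' i0 (mem_univ i0)
    rw [if_pos rfl] at h1 h2
    exact absurd h1.2 (not_le.2 h2.1)
  have hrem : (Q \ Ep) \ Em = ∅ := by
    rw [Set.eq_empty_iff_forall_notMem]
    rintro x ⟨⟨hxQ, hxEp⟩, hxEm⟩
    have hxQ' : ∀ j, x j ∈ Set.Icc (0:ℝ) 1 := fun j => hxQ j (mem_univ j)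
    have hx0 : 1/2 < x i0 := by
      by_contra hc
      push_neg at hc
      refine hxEp (fun j hj => ?_)
      show x j ∈ (if j = i0 then Set.Icc (0:ℝ) (1/2) else Set.Icc 0 1)
      by_cases h1 : j = i0
      · rw [if_pos h1, h1]
        exact ⟨(hxQ' i0).1, hc⟩
      · rw [if_neg h1]
        exact hxQ' j
    refine hxEm (fun j hj => ?_)
    show x j ∈ (if j = i0 then Set.Ioc (1/2:ℝ) 1 else Set.Icc 0 1)
    by_cases h1 : j = i0
    · rw [if_pos h1, h1]
      exact ⟨hx0, (hxQ' i0).2⟩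
    · rw [if_neg h1]
      exact hxQ' j
  have hvolEp : volume Ep = ENNReal.ofReal (1/2) := by
    rw [hEp, MeasureTheory.volume_pi_pi,
      ← Finset.mul_prod_erase Finset.univ _ (Finset.mem_univ i0)]
    have h1 : volume (if i0 = i0 then Set.Icc (0:ℝ) (1/2) else Set.Icc 0 1) =
        ENNReal.ofReal (1/2) := by rw [if_pos rfl, Real.volume_Icc]; norm_num
    rw [h1]
    have h2 : ∀ j ∈ Finset.univ.erase i0,
        volume (if j = i0 then Set.Icc (0:ℝ) (1/2) else Set.Icc 0 1) = 1 := by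
      intro j hj
      rw [if_neg (Finset.ne_of_mem_erase hj), Real.volume_Icc]
      norm_num
    rw [Finset.prod_congr rfl h2, Finset.prod_const, one_pow, mul_one]
  have hvolEm : volume Em = ENNReal.ofReal (1/2) := by
    rw [hEm, MeasureTheory.volume_pi_pi,
      ← Finset.mul_prod_erase Finset.univ _ (Finset.mem_univ i0)]
    have h1 : volume (if i0 = i0 then Set.Ioc (1/2:ℝ) 1 else Set.Icc 0 1) =
        ENNReal.ofReal (1/2) := by rw [if_pos rfl, Real.volume_Ioc]; norm_num
    rw [h1]
    have h2 : ∀ j ∈ Finset.univ.erase i0,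
        volume (if j = i0 then Set.Ioc (1/2:ℝ) 1 else Set.Icc 0 1) = 1 := by
      intro j hj
      rw [if_neg (Finset.ne_of_mem_erase hj), Real.volume_Icc]
      norm_num
    rw [Finset.prod_congr rfl h2, Finset.prod_const, one_pow, mul_one]
  have hhyp : min (volume Ep) (volume Em) > ENNReal.ofReal τ * volume ((Q \ Ep) \ Em) := by
    rw [hrem, hvolEp, hvolEm, min_self]
    simp only [measure_empty, mul_zero]
    exact ENNReal.ofReal_pos.2 (by norm_num)
  obtain ⟨W, hWc, hWQ, hWmin⟩ := hJS Q hQc Ep Em hEpm hEmm hEpQ hEmQ hdisj hhyp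
  obtain ⟨b, ℓ, hℓ, hWeq⟩ := hWc
  have hvolW : volume W = ENNReal.ofReal (ℓ ^ d) := by rw [hWeq]; exact volume_cube b hℓ.le
  have hWpos : volume W ≠ 0 := by
    rw [hvolW]
    simp only [ne_eq, ENNReal.ofReal_eq_zero, not_le]
    positivity
  have hWfin : volume W ≠ ⊤ := by rw [hvolW]; exact ENNReal.ofReal_ne_top
  have h1 : volume (Ep ∩ W) + volume (Em ∩ W) ≤ volume W := by
    rw [← measure_union (hdisj.mono inter_subset_left inter_subset_left) (hEmm.inter
      (by rw [hWeq]; exact MeasurableSet.univ_pi fun j => measurableSet_Icc))]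
    exact measure_mono (union_subset inter_subset_right inter_subset_right)
  have h2 : ENNReal.ofReal s * volume W + ENNReal.ofReal s * volume W ≤ volume W := by
    refine le_trans (add_le_add (le_trans hWmin.le ?_) (le_trans hWmin.le ?_)) h1 <;>
      [exact min_le_left _ _; exact min_le_right _ _]
  have h3 : (ENNReal.ofReal s + ENNReal.ofReal s) * volume W ≤ 1 * volume W := by
    rw [add_mul, one_mul]
    exact h2
  have h4 : ENNReal.ofReal s + ENNReal.ofReal s ≤ 1 :=
    (ENNReal.mul_le_mul_iff_left hWpos hWfin).1 h3
  rw [← ENNReal.ofReal_add hs.le hs.le] at h4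
  have := ENNReal.ofReal_le_one.1 h4
  linarith



lemma vol_cball (x : Fin d → ℝ) {r : ℝ} (hr : 0 ≤ r) :
    volume (closedBall x r) = ENNReal.ofReal ((2*r)^d) := by
  rw [Real.volume_pi_closedBall x hr, Fintype.card_fin]

lemma key_ineq (Em : Set (Fin d → ℝ)) {q : ℝ} (hq : 0 ≤ q) (x y : Fin d → ℝ) :
    volume (Em ∩ closedBall x q) ≤ volume (Em ∩ closedBall y q) +
      ENNReal.ofReal ((2*(q + dist x y))^d - (2*q)^d) := by
  have hd0 : (0:ℝ) ≤ dist x y := dist_nonneg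
  have hsub : closedBall x q ⊆ closedBall y (q + dist x y) :=
    closedBall_subset_closedBall' (by linarith)
  have h1 : Em ∩ closedBall x q ⊆ (Em ∩ closedBall y q) ∪
      (closedBall y (q + dist x y) \ closedBall y q) := by
    intro z hz
    rcases le_or_gt (dist z y) q with hc | hc
    · exact Or.inl ⟨hz.1, hc⟩
    · exact Or.inr ⟨hsub hz.2, not_le.2 hc⟩
  refine le_trans (measure_mono h1) (le_trans (measure_union_le _ _) ?_)
  refine add_le_add_right ?_ _
  rw [measure_diff (closedBall_subset_closedBall (by linarith))
    measurableSet_closedBall.nullMeasurableSet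
    ((vol_cball y hq).trans_ne ENNReal.ofReal_ne_top),
    vol_cball y hq, vol_cball y (by linarith)]
  rw [← ENNReal.ofReal_sub _ (by positivity)]

lemma isClosed_density (Em : Set (Fin d → ℝ)) {q C : ℝ} (hq : 0 ≤ q) (hC : 0 ≤ C) :
    IsClosed {x : Fin d → ℝ | volume (Em ∩ closedBall x q) ≤ ENNReal.ofReal C} := by
  have hfin : ∀ x : Fin d → ℝ, volume (Em ∩ closedBall x q) ≠ ∞ := fun x =>
    ne_top_of_le_ne_top ((vol_cball x hq).trans_ne ENNReal.ofReal_ne_top)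
      (measure_mono inter_subset_right)
  set g : (Fin d → ℝ) → ℝ := fun x => (volume (Em ∩ closedBall x q)).toReal with hg
  have hset : {x : Fin d → ℝ | volume (Em ∩ closedBall x q) ≤ ENNReal.ofReal C} =
      {x | g x ≤ C} := by
    ext x
    exact ENNReal.le_ofReal_iff_toReal_le (hfin x) hC
  rw [hset]
  refine isClosed_le ?_ continuous_const
  -- continuity of g
  rw [Metric.continuous_iff]
  intro b ε hε
  set h : ℝ → ℝ := fun t => (2*(q + t))^d - (2*q)^d with hh
  have hcont : Continuous h := by fun_prop
  have h0 : h 0 = 0 := by simp [hh]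
  have htd : Tendsto h (𝓝 0) (𝓝 0) := by
    have := hcont.tendsto 0
    rwa [h0] at this
  rw [Metric.tendsto_nhds_nhds] at htd
  obtain ⟨δ, hδ0, hδ⟩ := htd ε hε
  refine ⟨δ, hδ0, fun a ha => ?_⟩
  have hda : dist (dist a b) 0 < δ := by
    rw [Real.dist_eq, sub_zero, abs_of_nonneg dist_nonneg]
    exact lt_of_le_of_lt (le_refl _) ha
  have hhb := hδ hda
  rw [Real.dist_eq, sub_zero] at hhb
  have hmono : 0 ≤ h (dist a b) := by
    have : (2*q)^d ≤ (2*(q + dist a b))^d := by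
      apply pow_le_pow_left₀ (by linarith)
      have := dist_nonneg (x := a) (y := b)
      linarith
    simp only [hh]
    linarith
  have habs : h (dist a b) < ε := lt_of_abs_lt hhb
  -- two sided bound
  have hab : g a ≤ g b + h (dist a b) := by
    have := key_ineq Em hq a b
    have h2 := ENNReal.toReal_mono (by
      exact ENNReal.add_ne_top.2 ⟨hfin b, ENNReal.ofReal_ne_top⟩) this
    rw [ENNReal.toReal_add (hfin b) ENNReal.ofReal_ne_top,
      ENNReal.toReal_ofReal hmono] at h2
    exact h2
  have hba : g b ≤ g a + h (dist a b) := by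
    have := key_ineq Em hq b a
    rw [dist_comm b a] at this
    have h2 := ENNReal.toReal_mono (by
      exact ENNReal.add_ne_top.2 ⟨hfin a, ENNReal.ofReal_ne_top⟩) this
    rw [ENNReal.toReal_add (hfin a) ENNReal.ofReal_ne_top,
      ENNReal.toReal_ofReal hmono] at h2
    exact h2
  rw [Real.dist_eq]
  rw [abs_lt]
  constructor <;> linarith

lemma ae_small_density (Em : Set (Fin d → ℝ)) (hEm : MeasurableSet Em) {c : ℝ} (hc : 0 < c) :
    ∀ᵐ x ∂(volume : Measure (Fin d → ℝ)), x ∉ Em → ∃ δ > 0, ∀ ρ : ℝ, 0 < ρ → ρ ≤ δ →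
      volume (Em ∩ closedBall x ρ) ≤ ENNReal.ofReal (c * (2*ρ)^d) := by
  filter_upwards [Besicovitch.ae_tendsto_measure_inter_div_of_measurableSet volume hEm]
    with x hx hxEm
  have hind : Em.indicator (1 : (Fin d → ℝ) → ℝ≥0∞) x = 0 := by
    simp [indicator_of_notMem hxEm]
  rw [hind] at hx
  have hlt : ∀ᶠ ρ in 𝓝[>] (0:ℝ),
      volume (Em ∩ closedBall x ρ) / volume (closedBall x ρ) < ENNReal.ofReal c := by
    apply hx.eventually_lt_const
    exact ENNReal.ofReal_pos.2 hc
  rw [eventually_nhdsWithin_iff, Metric.eventually_nhds_iff] at hlt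
  obtain ⟨δ, hδ0, hδ⟩ := hlt
  refine ⟨δ/2, by linarith, fun ρ hρ0 hρδ => ?_⟩
  have h1 : dist ρ 0 < δ := by
    rw [Real.dist_eq, sub_zero, abs_of_pos hρ0]; linarith
  have h2 := hδ h1 hρ0
  have hball0 : volume (closedBall x ρ) ≠ 0 := by
    rw [vol_cball x hρ0.le]
    simp only [ne_eq, ENNReal.ofReal_eq_zero, not_le]
    positivity
  have hballt : volume (closedBall x ρ) ≠ ∞ := (vol_cball x hρ0.le).trans_ne ENNReal.ofReal_ne_top
  rw [ENNReal.div_lt_iff (Or.inl hball0) (Or.inl hballt)] at h2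
  refine le_trans h2.le ?_
  rw [vol_cball x hρ0.le, ← ENNReal.ofReal_mul hc.le]



/-- half-open grid cell -/
def gridCell (δ : ℝ) (j : Fin d → ℤ) : Set (Fin d → ℝ) :=
  Set.univ.pi fun i => Set.Ico (δ * j i) (δ * j i + δ)

lemma gridCell_disjoint {δ : ℝ} (hδ : 0 < δ) :
    Pairwise (Function.onFun Disjoint (gridCell (d := d) δ)) := by
  intro j j' hjj
  rw [Function.onFun, Set.disjoint_left]
  intro x hx hx'
  apply hjj
  funext i
  have h1 := hx i (mem_univ i)
  have h2 := hx' i (mem_univ i)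
  simp only [gridCell] at h1 h2
  by_contra hne
  rcases lt_or_gt_of_ne (fun hc => hne hc : j i ≠ j' i) with hlt | hlt
  · have : (j i : ℝ) + 1 ≤ (j' i : ℝ) := by exact_mod_cast hlt
    have : δ * j i + δ ≤ δ * j' i := by nlinarith
    exact absurd (lt_of_lt_of_le h1.2 this) (not_lt.2 h2.1)
  · have : (j' i : ℝ) + 1 ≤ (j i : ℝ) := by exact_mod_cast hlt
    have : δ * j' i + δ ≤ δ * j i := by nlinarith
    exact absurd (lt_of_lt_of_le h2.2 this) (not_lt.2 h1.1)

lemma gridCell_cover {δ : ℝ} (hδ : 0 < δ) (x : Fin d → ℝ) :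
    x ∈ gridCell δ (fun i => ⌊x i / δ⌋) := by
  intro i _
  have heq : δ * (x i / δ) = x i := by field_simp
  have h0 := Int.floor_le (x i / δ)
  have h1 := Int.lt_floor_add_one (x i / δ)
  constructor
  · have : δ * (⌊x i / δ⌋ : ℝ) ≤ δ * (x i / δ) := by nlinarith
    show δ * (⌊x i / δ⌋ : ℝ) ≤ x i
    linarith [heq ▸ this]
  · have : δ * (x i / δ) < δ * ((⌊x i / δ⌋ : ℝ) + 1) := by nlinarith
    show x i < δ * (⌊x i / δ⌋ : ℝ) + δ
    nlinarith [heq ▸ this]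

lemma gridCell_iUnion {δ : ℝ} (hδ : 0 < δ) : (⋃ j, gridCell (d := d) δ j) = univ :=
  eq_univ_of_forall fun x => mem_iUnion.2 ⟨_, gridCell_cover hδ x⟩

lemma gridCell_subset_Icc {δ : ℝ} (j : Fin d → ℤ) :
    gridCell δ j ⊆ Set.univ.pi fun i => Set.Icc (δ * j i) (δ * j i + δ) :=
  fun x hx i hi => Ico_subset_Icc_self (hx i hi)

lemma gridCell_diam {δ : ℝ} (hδ : 0 < δ) {j : Fin d → ℤ} {x y : Fin d → ℝ}
    (hx : x ∈ gridCell δ j) (hy : y ∈ gridCell δ j) (i : Fin d) : |x i - y i| < δ := by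
  have h1 := hx i (mem_univ i)
  have h2 := hy i (mem_univ i)
  simp only [gridCell] at h1 h2
  rw [abs_lt]
  constructor <;> [nlinarith [h1.1, h2.2]; nlinarith [h1.2, h2.1]]

lemma volume_pi_if (i0 : Fin d) (f : Fin d → Set ℝ) (a1 a2 : ℝ≥0∞) (h1 : volume (f i0) = a1)
    (h2 : ∀ j, j ≠ i0 → volume (f j) = a2) :
    volume (Set.univ.pi f) = a1 * a2 ^ (d - 1) := by
  rw [MeasureTheory.volume_pi_pi, ← Finset.mul_prod_erase Finset.univ _ (Finset.mem_univ i0), h1]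
  congr 1
  rw [Finset.prod_congr rfl (fun j hj => h2 j (Finset.ne_of_mem_erase hj)), Finset.prod_const,
    Finset.card_erase_of_mem (Finset.mem_univ i0), Finset.card_univ, Fintype.card_fin]

set_option maxHeartbeats 1000000 in
theorem stmt_5 (d : ℕ) (hd : 1 ≤ d) (τ s θ : ℝ)
    (h : IsJSPair d τ s) (hθ0 : 0 < θ) (hθ : θ < s / (1 - s)) :
    IsJSPair d ((1 - θ) * τ) (s - θ * (1 - s)) := by
  have hs2 : s ≤ 1/2 := s_le_half hd h
  obtain ⟨hτ, hs, hJS⟩ := h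
  have h1s : 0 < 1 - s := by linarith
  have hθs : θ * (1 - s) < s := (lt_div_iff₀ h1s).1 hθ
  have hθ1 : θ < 1 := by nlinarith
  have hs' : 0 < s - θ * (1 - s) := by linarith
  refine ⟨by nlinarith, hs', ?_⟩
  intro Q hQc Ep Em hEpm hEmm hEpQ hEmQ hdisj hhyp
  obtain ⟨qa, L, hL, hQeq⟩ := hQc
  have hQm : MeasurableSet Q := by
    rw [hQeq]; exact MeasurableSet.univ_pi fun i => measurableSet_Icc
  have hQfin : volume Q ≠ ⊤ := by
    rw [hQeq, volume_cube qa hL.le]; exact ENNReal.ofReal_ne_top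
  set R : Set (Fin d → ℝ) := (Q \ Ep) \ Em with hR
  have hRm : MeasurableSet R := (hQm.diff hEpm).diff hEmm
  have hRQ : R ⊆ Q := fun x hx => hx.1.1
  have hRfin : volume R ≠ ⊤ := ne_top_of_le_ne_top hQfin (measure_mono hRQ)
  have hREm : Disjoint R Em := disjoint_sdiff_left
  have hREp : Disjoint R Ep := disjoint_sdiff_left.mono_left diff_subset
  by_cases hcase : ENNReal.ofReal τ * volume R < min (volume Ep) (volume Em)
  · obtain ⟨W, hWc, hWQ, hWge⟩ := hJS Q ⟨qa, L, hL, hQeq⟩ Ep Em hEpm hEmm hEpQ hEmQ hdisj hcase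
    refine ⟨W, hWc, hWQ, le_trans ?_ hWge⟩
    exact mul_le_mul_left (ENNReal.ofReal_le_ofReal (by nlinarith)) _
  · push_neg at hcase
    set m := min (volume Ep) (volume Em) with hm
    have hmfin : m ≠ ⊤ :=
      ne_top_of_le_ne_top hQfin (le_trans (min_le_left _ _) (measure_mono hEpQ))
    have hm0 : 0 < m := lt_of_le_of_lt zero_le hhyp
    have hRpos : volume R ≠ 0 := by
      intro hzero
      rw [hzero, mul_zero] at hcase
      exact absurd (lt_of_lt_of_le hm0 hcase) (lt_irrefl 0)
    set r : ℝ := (volume R).toReal with hrdef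
    have hr0 : 0 < r := ENNReal.toReal_pos hRpos hRfin
    set mr : ℝ := m.toReal with hmrdef
    have hmr0 : 0 < mr := ENNReal.toReal_pos hm0.ne' hmfin
    have hmr1 : (1 - θ) * τ * r < mr := by
      have h1 : (ENNReal.ofReal ((1 - θ) * τ) * volume R).toReal < m.toReal := by
        apply (ENNReal.toReal_lt_toReal (ENNReal.mul_ne_top ENNReal.ofReal_ne_top hRfin)
          hmfin).2 hhyp
      rwa [ENNReal.toReal_mul, ENNReal.toReal_ofReal (by nlinarith)] at h1
    have hmr2 : mr ≤ τ * r := by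
      have h1 := ENNReal.toReal_mono (ENNReal.mul_ne_top ENNReal.ofReal_ne_top hRfin) hcase
      rwa [ENNReal.toReal_mul, ENNReal.toReal_ofReal hτ.le] at h1
    set c0 : ℝ := r - mr / τ with hc0def
    have hc00 : 0 ≤ c0 := by
      have : mr / τ ≤ r := by rw [div_le_iff₀ hτ]; nlinarith
      rw [hc0def]; linarith
    have hc0θ : c0 < θ * r := by
      have : (1 - θ) * r < mr / τ := by rw [lt_div_iff₀ hτ]; nlinarith
      simp only [hc0def]; linarith
    set θh : ℝ := (θ + c0 / r) / 2 with hθhdef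
    have hθh0 : 0 < θh := by
      have h1 : 0 ≤ c0 / r := div_nonneg hc00 hr0.le
      rw [hθhdef]; linarith
    have hθhθ : θh < θ := by
      have : c0 / r < θ := by rw [div_lt_iff₀ hr0]; linarith
      simp only [hθhdef]; linarith
    have hθhc0 : c0 < θh * r := by
      have h1 : c0 / r < θh := by
        have : c0 / r < θ := by rw [div_lt_iff₀ hr0]; linarith
        simp only [hθhdef]; linarith
      calc c0 = c0 / r * r := by field_simp
      _ < θh * r := by nlinarith
    have hθh1 : θh < 1 := lt_trans hθhθ hθ1
    set εh : ℝ := (θ - θh) * (1 - s) with hεhdef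
    have hεh0 : 0 < εh := by
      rw [hεhdef]; exact mul_pos (by linarith) h1s
    set c1 : ℝ := s / (2 * 4 ^ d) with hc1def
    have hc1 : 0 < c1 := by positivity
    -- the sets of locally-Em-light points
    set RkSet : ℕ → Set (Fin d → ℝ) := fun k => R ∩ ⋂ (q : ℚ), ⋂ (_ : 0 < (q : ℝ)),
      ⋂ (_ : (q : ℝ) ≤ 2 / (k + 1)),
        {x | volume (Em ∩ closedBall x (q : ℝ)) ≤ ENNReal.ofReal (c1 * (2 * (q : ℝ)) ^ d)}
      with hRkdef
    have hRkm : ∀ k, MeasurableSet (RkSet k) := by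
      intro k
      refine hRm.inter (MeasurableSet.iInter fun q => MeasurableSet.iInter fun hq =>
        MeasurableSet.iInter fun _ => ?_)
      exact (isClosed_density Em hq.le (by positivity)).measurableSet
    have hRkR : ∀ k, RkSet k ⊆ R := fun k => inter_subset_left
    have hRkmono : Monotone RkSet := by
      intro k k' hkk x hx
      refine ⟨hx.1, ?_⟩
      have h2 := hx.2
      simp only [mem_iInter, mem_setOf_eq] at h2 ⊢
      intro q hq hq2
      refine h2 q hq (le_trans hq2 ?_)
      apply div_le_div_of_nonneg_left (by norm_num) (by positivity)
      exact_mod_cast by exact_mod_cast Nat.add_le_add_right hkk 1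
    have hcov : volume (R \ ⋃ k, RkSet k) = 0 := by
      have hae := ae_small_density Em hEmm hc1
      refine measure_mono_null (fun x hx => ?_) (ae_iff.1 hae)
      simp only [mem_setOf_eq]
      intro hP
      have hxEm : x ∉ Em := disjoint_left.1 hREm hx.1
      obtain ⟨δ, hδpos, hprop⟩ := hP hxEm
      apply hx.2
      obtain ⟨n, hn⟩ := exists_nat_ge (2 / δ)
      refine mem_iUnion.2 ⟨n, hx.1, ?_⟩
      simp only [mem_iInter, mem_setOf_eq]
      intro q hq hq2
      refine hprop q hq (le_trans hq2 ?_)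
      rw [div_le_iff₀ (by positivity)]
      rw [div_le_iff₀ hδpos] at hn
      nlinarith
    have hux : volume (⋃ k, RkSet k) = volume R := by
      refine le_antisymm (measure_mono (iUnion_subset hRkR)) ?_
      calc volume R ≤ volume ((⋃ k, RkSet k) ∪ (R \ ⋃ k, RkSet k)) := by
            apply measure_mono
            intro x hx
            by_cases hc : x ∈ ⋃ k, RkSet k
            · exact Or.inl hc
            · exact Or.inr ⟨hx, hc⟩
      _ ≤ volume (⋃ k, RkSet k) + volume (R \ ⋃ k, RkSet k) := measure_union_le _ _
      _ = volume (⋃ k, RkSet k) := by rw [hcov, add_zero]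
    -- choose k
    have hk : ∃ k : ℕ, c0 < θh * (volume (RkSet k)).toReal := by
      have htd : Tendsto (fun k => volume (RkSet k)) atTop (𝓝 (volume (⋃ k, RkSet k))) :=
        tendsto_measure_iUnion_atTop hRkmono
      rw [hux] at htd
      have htd2 : Tendsto (fun k => θh * (volume (RkSet k)).toReal) atTop (𝓝 (θh * r)) :=
        (((ENNReal.tendsto_toReal hRfin).comp htd).const_mul θh)
      exact (htd2.eventually (eventually_gt_nhds hθhc0)).exists
    obtain ⟨k, hkgood⟩ := hk
    set ρk : ℝ := (volume (RkSet k)).toReal with hρkdef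
    have hRkfin : volume (RkSet k) ≠ ⊤ := ne_top_of_le_ne_top hRfin (measure_mono (hRkR k))
    -- grid scale
    set γ : ℝ := min 1 (εh / (4 * d * 3 ^ (d - 1))) with hγdef
    have hγ0 : 0 < γ := by
      apply lt_min one_pos
      have : (0:ℝ) < d := by exact_mod_cast hd
      positivity
    have hγ1 : γ ≤ 1 := min_le_left _ _
    have hγε : 4 * d * 3 ^ (d-1) * γ ≤ εh := by
      have h1 : γ ≤ εh / (4 * d * 3 ^ (d - 1)) := min_le_right _ _
      have hpos : (0:ℝ) < 4 * d * 3 ^ (d-1) := by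
        have : (0:ℝ) < d := by exact_mod_cast hd
        positivity
      rw [le_div_iff₀ hpos] at h1
      linarith
    set δ0 : ℝ := γ / (k + 1) with hδ0def
    have hδ0 : 0 < δ0 := by positivity
    set i0 : Fin d := ⟨0, hd⟩ with hi0
    -- choose the proportional subsets in each cell
    have hsel : ∀ j : Fin d → ℤ, ∃ A, MeasurableSet A ∧ A ⊆ RkSet k ∩ gridCell δ0 j ∧
        volume A = ENNReal.ofReal θh * volume (RkSet k ∩ gridCell δ0 j) := by
      intro j
      exact exists_subset_volume_eq ((hRkm k).inter
        (MeasurableSet.univ_pi fun i => measurableSet_Ico)) (fun i => δ0 * j i) hδ0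
        (inter_subset_right.trans (gridCell_subset_Icc j)) hθh0.le hθh1.le i0
    choose Afun hAm hAsub hAvol using hsel
    set A : Set (Fin d → ℝ) := ⋃ j, Afun j with hAdef
    have hAm' : MeasurableSet A := MeasurableSet.iUnion hAm
    have hAdisj : Pairwise (Function.onFun Disjoint Afun) := fun i j hij =>
      (gridCell_disjoint hδ0 hij).mono ((hAsub i).trans inter_subset_right)
        ((hAsub j).trans inter_subset_right)
    have hAsubRk : A ⊆ RkSet k := iUnion_subset fun j => (hAsub j).trans inter_subset_left
    have hAsubR : A ⊆ R := hAsubRk.trans (hRkR k)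
    have hAfin : volume A ≠ ⊤ := ne_top_of_le_ne_top hRfin (measure_mono hAsubR)
    have hAvol' : volume A = ENNReal.ofReal θh * volume (RkSet k) := by
      rw [hAdef, measure_iUnion hAdisj hAm, tsum_congr hAvol, ENNReal.tsum_mul_left]
      congr 1
      rw [← measure_iUnion (fun a c hac => ((gridCell_disjoint hδ0 hac).mono
        inter_subset_right inter_subset_right))
        (fun j => (hRkm k).inter (MeasurableSet.univ_pi fun i => measurableSet_Ico)),
        ← inter_iUnion, gridCell_iUnion hδ0, inter_univ]
    -- the new configuration
    have hrem' : (Q \ (Ep ∪ A)) \ Em = R \ A := by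
      rw [hR, ← Set.diff_diff, Set.diff_diff_comm]
    have hhyp' : ENNReal.ofReal τ * volume ((Q \ (Ep ∪ A)) \ Em) <
        min (volume (Ep ∪ A)) (volume Em) := by
      rw [hrem']
      have hsub : volume (R \ A) = volume R - volume A :=
        measure_diff hAsubR hAm'.nullMeasurableSet hAfin
      have hRAfin : volume (R \ A) ≠ ⊤ := ne_top_of_le_ne_top hRfin (measure_mono diff_subset)
      have htr : (volume (R \ A)).toReal = r - θh * ρk := by
        rw [hsub, ENNReal.toReal_sub_of_le (measure_mono hAsubR) hRfin, hAvol',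
          ENNReal.toReal_mul, ENNReal.toReal_ofReal hθh0.le]
      have hlt : τ * (r - θh * ρk) < mr := by
        have h1 : r - θh * ρk < mr / τ := by
          have h2 := hkgood
          rw [hc0def] at h2
          linarith
        have h3 := mul_lt_mul_of_pos_left h1 hτ
        have h4 : τ * (mr / τ) = mr := by field_simp
        linarith
      have h2 : ENNReal.ofReal τ * volume (R \ A) < m := by
        have hv : volume (R \ A) = ENNReal.ofReal (r - θh * ρk) := by
          rw [← htr, ENNReal.ofReal_toReal hRAfin]
        rw [hv, ← ENNReal.ofReal_mul hτ.le]
        calc ENNReal.ofReal (τ * (r - θh * ρk)) < ENNReal.ofReal mr :=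
              (ENNReal.ofReal_lt_ofReal_iff hmr0).2 hlt
        _ = m := ENNReal.ofReal_toReal hmfin
      exact lt_of_lt_of_le h2 (le_min
        (le_trans (min_le_left _ _) (measure_mono subset_union_left)) (min_le_right _ _))
    obtain ⟨W, hWc, hWQ, hWge⟩ := hJS Q ⟨qa, L, hL, hQeq⟩ (Ep ∪ A) Em (hEpm.union hAm') hEmm
      (union_subset hEpQ (hAsubR.trans hRQ)) hEmQ
      (disjoint_union_left.2 ⟨hdisj, hREm.mono_left hAsubR⟩) hhyp'
    obtain ⟨b, ℓ, hℓ, hWeq⟩ := hWc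
    have hWm : MeasurableSet W := by
      rw [hWeq]; exact MeasurableSet.univ_pi fun i => measurableSet_Icc
    have hWvol : volume W = ENNReal.ofReal (ℓ ^ d) := by rw [hWeq]; exact volume_cube b hℓ.le
    have hEmW : ENNReal.ofReal (s * ℓ ^ d) ≤ volume (Em ∩ W) := by
      rw [ENNReal.ofReal_mul hs.le, ← hWvol]
      exact (le_min_iff.1 hWge).2
    have hEpAW : ENNReal.ofReal (s * ℓ ^ d) ≤ volume ((Ep ∪ A) ∩ W) := by
      rw [ENNReal.ofReal_mul hs.le, ← hWvol]
      exact (le_min_iff.1 hWge).1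
    -- the key estimate
    have hAW : volume (A ∩ W) ≤ ENNReal.ofReal (θ * (1 - s) * ℓ ^ d) := by
      have hkℓ : (0:ℝ) < (k:ℝ) + 1 := by positivity
      rcases le_or_gt ℓ (1 / ((k:ℝ) + 1)) with hsmall | hbig
      · -- small cube : A ∩ W = ∅
        have hempty : A ∩ W = ∅ := by
          rw [eq_empty_iff_forall_notMem]
          rintro x ⟨hxA, hxW⟩
          have hxRk : x ∈ RkSet k := hAsubRk hxA
          obtain ⟨q, hq1, hq2⟩ := exists_rat_btwn (show ℓ < 2 * ℓ by linarith)
          have hq0 : 0 < (q:ℝ) := lt_trans hℓ hq1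
          have hqk : (q:ℝ) ≤ 2 / ((k:ℝ) + 1) := by
            rw [le_div_iff₀ hkℓ]
            rw [le_div_iff₀ hkℓ] at hsmall
            nlinarith
          have hmem := hxRk.2
          simp only [mem_iInter, mem_setOf_eq] at hmem
          have hball := hmem q hq0 hqk
          have hWball : W ⊆ closedBall x (q:ℝ) := by
            intro y hy
            rw [mem_closedBall, dist_pi_le_iff hq0.le]
            intro i
            have hyi : y i ∈ Icc (b i) (b i + ℓ) := by
              have h5 := hWeq ▸ hy; exact h5 i (mem_univ i)
            have hxi : x i ∈ Icc (b i) (b i + ℓ) := by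
              have h5 := hWeq ▸ hxW; exact h5 i (mem_univ i)
            rw [Real.dist_eq, abs_le]
            constructor
            · linarith [hyi.1, hxi.2, hq1.le]
            · linarith [hyi.2, hxi.1, hq1.le]
          have hcontr : ENNReal.ofReal (s * ℓ ^ d) ≤ ENNReal.ofReal (c1 * (2 * (q:ℝ)) ^ d) :=
            le_trans hEmW (le_trans (measure_mono (inter_subset_inter_right Em hWball)) hball)
          rw [ENNReal.ofReal_le_ofReal_iff (by positivity)] at hcontr
          have h1 : (2 * (q:ℝ)) ^ d ≤ (4 * ℓ) ^ d :=
            pow_le_pow_left₀ (by positivity) (by linarith) d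
          have h2 : c1 * (4 * ℓ) ^ d = s / 2 * ℓ ^ d := by
            rw [hc1def, mul_pow]
            have h4 : (0:ℝ) < 4 ^ d := by positivity
            field_simp
          have h3 : c1 * (2 * (q:ℝ)) ^ d ≤ s / 2 * ℓ ^ d := by
            rw [← h2]
            exact mul_le_mul_of_nonneg_left h1 hc1.le
          nlinarith [pow_pos hℓ d]
        rw [hempty, measure_empty]
        exact zero_le
      · -- large cube
        have hδℓ1 : δ0 ≤ γ * ℓ := by
          have h1 : 1 < ℓ * ((k:ℝ) + 1) := by
            rw [div_lt_iff₀ hkℓ] at hbig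
            linarith
          rw [hδ0def, div_le_iff₀ hkℓ]
          nlinarith [mul_le_mul_of_nonneg_left h1.le hγ0.le]
        have hδℓ : δ0 ≤ ℓ := by nlinarith
        set SLlo : Fin d → Set (Fin d → ℝ) := fun i => Set.univ.pi fun i' =>
          if i' = i then Icc (b i - δ0) (b i + δ0) else Icc (b i' - δ0) (b i' + ℓ + δ0) with hSLlo
        set SLhi : Fin d → Set (Fin d → ℝ) := fun i => Set.univ.pi fun i' =>
          if i' = i then Icc (b i + ℓ - δ0) (b i + ℓ + δ0) else Icc (b i' - δ0) (b i' + ℓ + δ0)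
          with hSLhi
        -- covering
        have hcover : A ∩ W ⊆ (⋃ j : {j : (Fin d → ℤ) // gridCell δ0 j ⊆ W}, Afun j.1) ∪
            ⋃ i : Fin d, (SLlo i ∪ SLhi i) := by
          rintro x ⟨hxA, hxW⟩
          obtain ⟨j0, hj0⟩ := mem_iUnion.1 hxA
          by_cases hj : gridCell δ0 j0 ⊆ W
          · exact Or.inl (mem_iUnion.2 ⟨⟨j0, hj⟩, hj0⟩)
          · right
            obtain ⟨y, hy, hyW⟩ := not_subset.1 hj
            have hxcell : x ∈ gridCell δ0 j0 := ((hAsub j0) hj0).2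
            have hyW' : ¬ ∀ i, y i ∈ Icc (b i) (b i + ℓ) := by
              intro hc
              exact hyW (by rw [hWeq]; exact fun i _ => hc i)
            push_neg at hyW'
            obtain ⟨i, hi⟩ := hyW'
            rw [mem_Icc, not_and_or, not_le, not_le] at hi
            have hxiW : ∀ i', x i' ∈ Icc (b i') (b i' + ℓ) := by
              intro i'
              have h5 := hWeq ▸ hxW; exact h5 i' (mem_univ i')
            have hdiam : ∀ i', |x i' - y i'| < δ0 := gridCell_diam hδ0 hxcell hy
            rcases hi with hlt | hgt
            · refine mem_iUnion.2 ⟨i, Or.inl fun i' _ => ?_⟩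
              show x i' ∈ (if i' = i then Icc (b i - δ0) (b i + δ0)
                else Icc (b i' - δ0) (b i' + ℓ + δ0))
              by_cases hii : i' = i
              · subst hii
                rw [if_pos rfl]
                have h6 := abs_lt.1 (hdiam i')
                exact ⟨by linarith [(hxiW i').1], by linarith⟩
              · rw [if_neg hii]
                exact ⟨by linarith [(hxiW i').1], by linarith [(hxiW i').2]⟩
            · refine mem_iUnion.2 ⟨i, Or.inr fun i' _ => ?_⟩
              show x i' ∈ (if i' = i then Icc (b i + ℓ - δ0) (b i + ℓ + δ0)
                else Icc (b i' - δ0) (b i' + ℓ + δ0))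
              by_cases hii : i' = i
              · subst hii
                rw [if_pos rfl]
                have h6 := abs_lt.1 (hdiam i')
                exact ⟨by linarith [(hxiW i').2], by linarith [(hxiW i').2]⟩
              · rw [if_neg hii]
                exact ⟨by linarith [(hxiW i').1], by linarith [(hxiW i').2]⟩
        -- volume of the inner part
        have hvol1 : volume (⋃ j : {j : (Fin d → ℤ) // gridCell δ0 j ⊆ W}, Afun j.1) ≤
            ENNReal.ofReal θh * volume (R ∩ W) := by
          have hAdisj' : Pairwise (Function.onFun Disjoint
              (fun j : {j : (Fin d → ℤ) // gridCell δ0 j ⊆ W} => Afun j.1)) := by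
            intro a c hac
            exact hAdisj fun hc => hac (Subtype.ext hc)
          rw [measure_iUnion hAdisj' (fun j => hAm j.1)]
          have e1 : ∑' (j : {j : (Fin d → ℤ) // gridCell δ0 j ⊆ W}), volume (Afun j.1) =
              ENNReal.ofReal θh * ∑' (j : {j : (Fin d → ℤ) // gridCell δ0 j ⊆ W}),
              volume (RkSet k ∩ gridCell δ0 j.1) := by
            rw [← ENNReal.tsum_mul_left]
            exact tsum_congr fun j => hAvol j.1
          rw [e1]
          apply mul_le_mul_right
          have hRkdisj' : Pairwise (Function.onFun Disjoint
              (fun j : {j : (Fin d → ℤ) // gridCell δ0 j ⊆ W} => RkSet k ∩ gridCell δ0 j.1)) := by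
            intro a c hac
            exact (gridCell_disjoint hδ0 fun hc => hac (Subtype.ext hc)).mono
              inter_subset_right inter_subset_right
          rw [← measure_iUnion hRkdisj'
            (fun j => (hRkm k).inter (MeasurableSet.univ_pi fun i => measurableSet_Ico))]
          apply measure_mono
          apply iUnion_subset
          rintro ⟨j, hjW⟩
          exact fun x hx => ⟨hRkR k hx.1, hjW hx.2⟩
        -- R ∩ W is not too big
        have hRW : volume (R ∩ W) ≤ ENNReal.ofReal ((1 - s) * ℓ ^ d) := by
          have hsum : volume (R ∩ W) + volume (Em ∩ W) ≤ volume W := by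
            rw [← measure_union (hREm.mono inter_subset_left inter_subset_left)
              (hEmm.inter hWm)]
            exact measure_mono (union_subset inter_subset_right inter_subset_right)
          have h2 : volume (R ∩ W) + ENNReal.ofReal (s * ℓ ^ d) ≤ ENNReal.ofReal (ℓ ^ d) := by
            refine le_trans (add_le_add_right hEmW _) ?_
            rw [← hWvol]
            exact hsum
          have h3 := ENNReal.le_sub_of_add_le_right ENNReal.ofReal_ne_top h2
          refine le_trans h3 ?_
          rw [← ENNReal.ofReal_sub _ (by positivity)]
          apply ENNReal.ofReal_le_ofReal
          apply le_of_eq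
          ring
        -- slab volumes
        set X : ℝ≥0∞ := ENNReal.ofReal (2 * δ0 * (ℓ + 2 * δ0) ^ (d - 1)) with hX
        have hslablo : ∀ i, volume (SLlo i) = X := by
          intro i
          rw [hSLlo]
          rw [volume_pi_if i _ (ENNReal.ofReal (2 * δ0)) (ENNReal.ofReal (ℓ + 2 * δ0)) ?_ ?_]
          · rw [hX, ← ENNReal.ofReal_pow (by linarith), ← ENNReal.ofReal_mul (by linarith)]
          · rw [if_pos rfl, Real.volume_Icc]
            congr 1
            ring
          · intro j hj
            rw [if_neg hj, Real.volume_Icc]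
            congr 1
            ring
        have hslabhi : ∀ i, volume (SLhi i) = X := by
          intro i
          rw [hSLhi]
          rw [volume_pi_if i _ (ENNReal.ofReal (2 * δ0)) (ENNReal.ofReal (ℓ + 2 * δ0)) ?_ ?_]
          · rw [hX, ← ENNReal.ofReal_pow (by linarith), ← ENNReal.ofReal_mul (by linarith)]
          · rw [if_pos rfl, Real.volume_Icc]
            congr 1
            ring
          · intro j hj
            rw [if_neg hj, Real.volume_Icc]
            congr 1
            ring
        have hvol2 : volume (⋃ i : Fin d, (SLlo i ∪ SLhi i)) ≤
            ENNReal.ofReal (4 * d * δ0 * (ℓ + 2 * δ0) ^ (d - 1)) := by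
          refine le_trans (measure_iUnion_le _) ?_
          have h1 : ∀ i : Fin d, volume (SLlo i ∪ SLhi i) ≤ X + X := fun i =>
            le_trans (measure_union_le _ _) (by rw [hslablo i, hslabhi i])
          refine le_trans (ENNReal.tsum_le_tsum h1) ?_
          rw [tsum_fintype, Finset.sum_const, Finset.card_univ, Fintype.card_fin, nsmul_eq_mul]
          rw [hX, ← ENNReal.ofReal_add (by positivity) (by positivity)]
          have hd' : ((d:ℝ≥0∞)) = ENNReal.ofReal (d:ℝ) := by
            rw [ENNReal.ofReal_natCast]
          rw [hd', ← ENNReal.ofReal_mul (by positivity)]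
          apply ENNReal.ofReal_le_ofReal
          apply le_of_eq
          ring
        -- combine
        refine le_trans (measure_mono hcover) (le_trans (measure_union_le _ _) ?_)
        refine le_trans (add_le_add (le_trans hvol1 (mul_le_mul_right hRW _)) hvol2) ?_
        rw [← ENNReal.ofReal_mul hθh0.le, ← ENNReal.ofReal_add
          (mul_nonneg hθh0.le (mul_nonneg h1s.le (pow_nonneg hℓ.le d))) (by positivity)]
        apply ENNReal.ofReal_le_ofReal
        -- final real inequality
        have hp1 : (ℓ + 2 * δ0) ^ (d - 1) ≤ 3 ^ (d - 1) * ℓ ^ (d - 1) := by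
          rw [← mul_pow]
          exact pow_le_pow_left₀ (by linarith) (by linarith) (d - 1)
        have hp2 : ℓ ^ (d - 1) * ℓ = ℓ ^ d := by
          rw [← pow_succ, Nat.sub_add_cancel hd]
        have hp3 : 4 * d * δ0 * (ℓ + 2 * δ0) ^ (d - 1) ≤ εh * ℓ ^ d := by
          have h1 : 4 * d * δ0 * (ℓ + 2 * δ0) ^ (d - 1) ≤
              4 * d * (γ * ℓ) * (3 ^ (d - 1) * ℓ ^ (d - 1)) := by
            apply mul_le_mul
            · apply mul_le_mul_of_nonneg_left hδℓ1
              positivity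
            · exact hp1
            · positivity
            · positivity
          have h2 : 4 * d * (γ * ℓ) * (3 ^ (d - 1) * ℓ ^ (d - 1)) =
              (4 * d * 3 ^ (d - 1) * γ) * ℓ ^ d := by
            rw [← hp2]
            ring
          have h3 : (4 * (d:ℝ) * 3 ^ (d - 1) * γ) * ℓ ^ d ≤ εh * ℓ ^ d := by
            apply mul_le_mul_of_nonneg_right hγε
            positivity
          linarith
        have hfin : θh * ((1 - s) * ℓ ^ d) + εh * ℓ ^ d = θ * (1 - s) * ℓ ^ d := by
          rw [hεhdef]
          ring
        linarith
    -- conclude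
    refine ⟨W, ⟨b, ℓ, hℓ, hWeq⟩, hWQ, le_min ?_ ?_⟩
    · -- Ep side
      have h1 : volume ((Ep ∪ A) ∩ W) ≤ volume (Ep ∩ W) + volume (A ∩ W) := by
        rw [union_inter_distrib_right]
        exact measure_union_le _ _
      have h2 : ENNReal.ofReal ((s - θ * (1 - s)) * ℓ ^ d) + ENNReal.ofReal (θ * (1 - s) * ℓ ^ d)
          ≤ volume (Ep ∩ W) + ENNReal.ofReal (θ * (1 - s) * ℓ ^ d) := by
        have h3 : ENNReal.ofReal ((s - θ * (1 - s)) * ℓ ^ d) +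
            ENNReal.ofReal (θ * (1 - s) * ℓ ^ d) = ENNReal.ofReal (s * ℓ ^ d) := by
          rw [← ENNReal.ofReal_add (mul_nonneg hs'.le (pow_nonneg hℓ.le d))
            (mul_nonneg (mul_nonneg hθ0.le h1s.le) (pow_nonneg hℓ.le d))]
          congr 1
          ring
        rw [h3]
        exact le_trans (le_trans hEpAW h1) (add_le_add_right hAW _)
      have h4 := (ENNReal.add_le_add_iff_right ENNReal.ofReal_ne_top).1 h2
      rw [hWvol, ← ENNReal.ofReal_mul hs'.le]
      exact h4
    · rw [hWvol, ← ENNReal.ofReal_mul hs'.le]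
      refine le_trans (ENNReal.ofReal_le_ofReal ?_) hEmW
      nlinarith [pow_nonneg hℓ.le d, mul_nonneg (mul_nonneg hθ0.le h1s.le) (pow_nonneg hℓ.le d)]
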